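/- Let G be a group and suppose (g_σ : σ ∈ 2^κ) are elements of G constructed along branches of the tree 2^{<κ}, with a splitting family (h_s, k_s : s ∈ 2^{<κ} of successor length) in G such that: h_{s⌢0} ∈ H, h_{s⌢1} ∉ H, k_{s⌢0} = k_{s⌢1}, and g_σ h_t g_σ^{-1} = k_t whenever t is a successor-length initial segment of σ. Then for distinct branches σ ≠ τ with largest common initial segment s, g_σ^{-1} g_τ ∉ H; consequently [G : H] ≥ 2^κ. -/

import Mathlib

universe u

/-- The tree/branch coset-separation argument: branches `σ ∈ 2^κ` are coded as functions
`Ordinal → Bool` (only values at ordinals `< κ.ord` are relevant); the node of successor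
length `o + 1` along `t` carries elements `h o t` and `k o t` which depend only on
`t ↾ (o+1)` resp. `t ↾ o`; the last bit decides membership of `h` in `H`; and `g σ`
conjugates `h` to `k` along initial segments of `σ`.  Then distinct branches give distinct
cosets of `H`, and `[G : H] ≥ 2^κ`. -/
theorem tree_coset_separation {G : Type u} [Group G] (H : Subgroup G)
    (κ : Cardinal.{u}) (hκ : Cardinal.aleph0 ≤ κ)
    (g : (Ordinal.{u} → Bool) → G)
    (h k : Ordinal.{u} → (Ordinal.{u} → Bool) → G)
    (hgext : ∀ σ σ' : Ordinal.{u} → Bool, (∀ β < κ.ord, σ β = σ' β) → g σ = g σ')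
    (hhext : ∀ o < κ.ord, ∀ t t' : Ordinal.{u} → Bool, (∀ β ≤ o, t β = t' β) → h o t = h o t')
    (hkext : ∀ o < κ.ord, ∀ t t' : Ordinal.{u} → Bool, (∀ β < o, t β = t' β) → k o t = k o t')
    (hh0 : ∀ o < κ.ord, ∀ t : Ordinal.{u} → Bool, t o = false → h o t ∈ H)
    (hh1 : ∀ o < κ.ord, ∀ t : Ordinal.{u} → Bool, t o = true → h o t ∉ H)
    (hconj : ∀ σ : Ordinal.{u} → Bool, ∀ o < κ.ord, g σ * h o σ * (g σ)⁻¹ = k o σ) :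
    (∀ σ τ : Ordinal.{u} → Bool, (∃ β < κ.ord, σ β ≠ τ β) → (g σ)⁻¹ * g τ ∉ H) ∧
      2 ^ κ ≤ Cardinal.mk (G ⧸ H) := by
  -- key lemma: if σ,τ agree below o, σ o = false, τ o = true, then separation
  have key : ∀ σ τ : Ordinal.{u} → Bool, ∀ o, o < κ.ord →
      (∀ β < o, σ β = τ β) → σ o = false → τ o = true → (g σ)⁻¹ * g τ ∉ H := by
    intro σ τ o ho hagree hσo hτo hmem
    have hk : k o σ = k o τ := hkext o ho σ τ hagree
    have e1 := hconj σ o ho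
    have e2 := hconj τ o ho
    have e : g σ * h o σ * (g σ)⁻¹ = g τ * h o τ * (g τ)⁻¹ := by rw [e1, e2, hk]
    have e' : h o τ = ((g σ)⁻¹ * g τ)⁻¹ * h o σ * ((g σ)⁻¹ * g τ) := by
      have e'' : h o τ = (g τ)⁻¹ * (g σ * h o σ * (g σ)⁻¹) * g τ := by
        rw [e]; group
      rw [e'']; group
    have hmemσ : h o σ ∈ H := hh0 o ho σ hσo
    have : h o τ ∈ H := by
      rw [e']
      exact H.mul_mem (H.mul_mem (H.inv_mem hmem) hmemσ) hmem
    exact hh1 o ho τ hτo this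
  have main : ∀ σ τ : Ordinal.{u} → Bool, (∃ β < κ.ord, σ β ≠ τ β) →
      (g σ)⁻¹ * g τ ∉ H := by
    intro σ τ ⟨β, hβ, hne⟩
    -- take the least ordinal where they differ
    obtain ⟨o, ⟨hoκ, hone⟩, homin⟩ :=
      Ordinal.lt_wf.has_min {β | β < κ.ord ∧ σ β ≠ τ β} ⟨β, hβ, hne⟩
    have hagree : ∀ γ < o, σ γ = τ γ := by
      intro γ hγ
      by_contra hc
      exact homin γ ⟨hγ.trans hoκ, hc⟩ hγ
    cases hσo : σ o
    · have hτo : τ o = true := by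
        cases hb : τ o
        · exact absurd (hσo.trans hb.symm) hone
        · rfl
      exact key σ τ o hoκ hagree hσo hτo
    · have hτo : τ o = false := by
        cases hb : τ o
        · rfl
        · exact absurd (hσo.trans hb.symm) hone
      intro hmem
      have : (g τ)⁻¹ * g σ ∈ H := by
        have := H.inv_mem hmem
        rwa [mul_inv_rev, inv_inv] at this
      exact key τ σ o hoκ (fun γ hγ => (hagree γ hγ).symm) hτo hσo this
  refine ⟨main, ?_⟩
  -- injection from (κ.ord.ToType → Bool) into G ⧸ H
  set ext : (κ.ord.ToType → Bool) → (Ordinal.{u} → Bool) :=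
    fun f β => if hβ : β < κ.ord then f ((Ordinal.ToType.mk (o := κ.ord)) ⟨β, hβ⟩) else false
    with hext
  have hinj : Function.Injective (fun f : κ.ord.ToType → Bool =>
      (QuotientGroup.mk (g (ext f)) : G ⧸ H)) := by
    intro f f' hff
    by_contra hne
    have hdiff : ∃ β < κ.ord, ext f β ≠ ext f' β := by
      obtain ⟨x, hbne⟩ := Function.ne_iff.mp hne
      set y := (Ordinal.ToType.mk (o := κ.ord)).symm x with hy
      refine ⟨y.1, y.2, ?_⟩
      have hy1 : (Ordinal.ToType.mk (o := κ.ord)) ⟨y.1, y.2⟩ = x := by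
        rw [hy]; simp
      have hy2 : (y : Ordinal.{u}) < κ.ord := y.2
      simp only [hext]
      simp only [dif_pos hy2, hy1]
      exact hbne
    exact main _ _ hdiff ((QuotientGroup.eq).mp hff)
  calc 2 ^ κ = Cardinal.mk (κ.ord.ToType → Bool) := by
        rw [Cardinal.mk_arrow, Cardinal.mk_bool, Cardinal.mk_ord_toType]
        simp
    _ ≤ Cardinal.mk (G ⧸ H) := Cardinal.mk_le_of_injective hinj
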